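/- Let 𝒫 be a finite tile collection, sparse relative to a sufficiently large absolute constant, with an L¹-normalized wave packet collection {φ_P} and a rigid collection of interval triples {(ω_{P,lower}, ω_P, ω_{P,upper})}, and let T₁f(P) := ⟨f, φ_P⟩. Then ‖T₁f‖_{𝓛^∞(𝒫, S_{2,lac}, μ)} ≲ sup_{E ⊂ 𝒫 lacunary generating} |I_E|^{−1} ‖ ( Σ_{P∈E} |T₁f(P)|² 1_{I_P} )^{1/2} ‖_{L^{1,∞}(ℝ)}, with implicit constant independent of 𝒫 and f. -/

import Mathlib

open MeasureTheory Complex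
open scoped ENNReal Classical

noncomputable section

/-- A bounded half-open interval `[lo, hi)`. -/
structure Iv where
  lo : ℝ
  hi : ℝ
  hlt : lo < hi

namespace Iv

/-- The length `|I|`. -/
def len (I : Iv) : ℝ := I.hi - I.lo

/-- The midpoint `c(I)`. -/
def c (I : Iv) : ℝ := (I.lo + I.hi) / 2

/-- The underlying set of points. -/
def set (I : Iv) : Set ℝ := Set.Ico I.lo I.hi

/-- The `C`-fold dilate `CI` of `I` about its center. -/
def dil (C : ℝ) (I : Iv) : Set ℝ := Set.Ico (I.c - C * I.len / 2) (I.c + C * I.len / 2)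

/-- The translate `I + t`. -/
def trans (I : Iv) (t : ℝ) : Iv := ⟨I.lo + t, I.hi + t, by have := I.hlt; linarith⟩

/-- The left half of `I`. -/
def left (I : Iv) : Iv := ⟨I.lo, I.c, by have := I.hlt; simp only [Iv.c]; linarith⟩

end Iv

/-- Standard dyadic interval `[n 2^k, (n+1) 2^k)`. -/
def IsDyadic (I : Iv) : Prop :=
  ∃ n k : ℤ, I.lo = (n : ℝ) * 2 ^ k ∧ I.hi = ((n : ℝ) + 1) * 2 ^ k

/-- `a`-shifted dyadic interval `2^k([n, n+1) + (-1)^k a)`. -/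
def IsShiftedDyadicWith (a : ℝ) (I : Iv) : Prop :=
  ∃ n k : ℤ, I.lo = 2 ^ k * ((n : ℝ) + (-1 : ℝ) ^ k * a) ∧
    I.hi = 2 ^ k * ((n : ℝ) + 1 + (-1 : ℝ) ^ k * a)

/-- Shifted dyadic interval, with shift in `[0,1)`. -/
def IsShiftedDyadic (I : Iv) : Prop := ∃ a ∈ Set.Ico (0 : ℝ) 1, IsShiftedDyadicWith a I

/-- A tile `P = I_P × ω_P`: a rectangle of area `1` whose spatial interval is standard
dyadic and whose frequency interval is a (possibly shifted) dyadic interval. -/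
structure Tile where
  I : Iv
  ω : Iv
  dyI : IsDyadic I
  sdω : IsShiftedDyadic ω
  area : I.len * ω.len = 1

/-- The weight `χ̃_I(x) = (1 + |x - c(I)|/|I|)^{-2}`. -/
def chit (I : Iv) (x : ℝ) : ℝ := ((1 + |x - I.c| / I.len) ^ 2)⁻¹

/-- A finite tile collection is sparse relative to `C₀`. -/
def Sparse (C₀ : ℝ) (Pcol : Finset Tile) : Prop :=
  ∀ P ∈ Pcol, ∀ Q ∈ Pcol, Q.I.len / C₀ ≤ P.I.len → P.I.len ≤ Q.I.len →
    P.I.len = Q.I.len ∧ (P.ω = Q.ω ∨ P.ω.dil C₀ ∩ Q.ω.dil C₀ = ∅)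

/-- The Fourier transform with the paper's normalization
`f̂(ξ) = (2π)^{-1/2} ∫ f(x) e^{-i x ξ} dx`. -/
def ftx (f : ℝ → ℂ) (ξ : ℝ) : ℂ :=
  ((2 * Real.pi) ^ (-(1/2 : ℝ)) : ℝ) * ∫ x : ℝ, f x * Complex.exp (-(Complex.I * x * ξ))

/-- The inner product `⟨f, g⟩ = ∫ f ḡ`. -/
def inn (f g : ℝ → ℂ) : ℂ := ∫ x : ℝ, f x * (starRingEnd ℂ) (g x)

/-- `{φ_P}` is an `L¹`-normalized wave packet collection for `Pcol`, with constants `Cw n`: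
`supp φ̂_P ⊂ (5/4)ω_P` and
`|(d/dx)^n (e^{-i c(ω_P) x} φ_P(x))| ≤ Cw n |I_P|^{-n-1} (1+|x-c(I_P)|/|I_P|)^{-n}`. -/
def WavePacketFam (Pcol : Finset Tile) (φ : Tile → ℝ → ℂ) (Cw : ℕ → ℝ) : Prop :=
  (∀ P ∈ Pcol, Function.support (ftx (φ P)) ⊆ P.ω.dil (5/4)) ∧
  ∀ n : ℕ, ∀ P ∈ Pcol, ∀ x : ℝ,
    ‖iteratedDeriv n (fun y : ℝ => Complex.exp (-(Complex.I * P.ω.c * y)) * φ P y) x‖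
      ≤ Cw n * P.I.len ^ (-(n : ℝ) - 1) * (1 + |x - P.I.c| / P.I.len) ^ (-(n : ℝ))

/-- `ω_{P,lower}`: the half-line `(-∞, c(ω_P) - (m - 1/2)|ω_P|)`. -/
def ωlowF (m : ℤ) (P : Tile) : Set ℝ := Set.Iio (P.ω.c - ((m : ℝ) - 1/2) * P.ω.len)

/-- `ω_{P,upper}`: the translated interval `ω_P + n |ω_P|`. -/
def ωupF (n : ℤ) (P : Tile) : Iv := P.ω.trans ((n : ℝ) * P.ω.len)

/-- The rigidity constraint `L₁ < m, n ≲ L₁` on the integers `m, n`. -/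
def RigidParams (L₁ A : ℝ) (m n : ℤ) : Prop :=
  L₁ < (m : ℝ) ∧ (m : ℝ) ≤ A * L₁ ∧ L₁ < (n : ℝ) ∧ (n : ℝ) ≤ A * L₁

/-- `1000 ω_P` lies strictly between `ω_{P,lower}` and `ω_{P,upper}`, for all `P ∈ Pcol`. -/
def StrictlyBetween (m n : ℤ) (Pcol : Finset Tile) : Prop :=
  ∀ P ∈ Pcol, ∀ x ∈ ωlowF m P, ∀ y ∈ P.ω.dil 1000, ∀ z ∈ (ωupF n P).set, x < y ∧ y < z

/-- `ω̃_P`: the convex hull of `50 ω_P` and `50 ω_{P,upper}`. -/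
def ωtl (n : ℤ) (P : Tile) : Set ℝ := convexHull ℝ (P.ω.dil 50 ∪ (ωupF n P).dil 50)

/-- A generating set: a nonempty `E ⊆ Pcol` together with a dyadic interval `I_E` and a
frequency `ξ_E` such that `I_P ⊆ I_E` and
`(ξ_E - 1/(2|I_E|), ξ_E + 1/(2|I_E|)) ⊆ ω̃_P` for every `P ∈ E`. -/
structure GenSet (Pcol : Finset Tile) (n : ℤ) where
  E : Finset Tile
  sub : E ⊆ Pcol
  ne : E.Nonempty
  top : Iv
  dyTop : IsDyadic top
  ξ : ℝ
  hI : ∀ P ∈ E, P.I.set ⊆ top.set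
  hξ : ∀ P ∈ E, Set.Ioo (ξ - 1 / (2 * top.len)) (ξ + 1 / (2 * top.len)) ⊆ ωtl n P

/-- A generating set is lacunary if `ξ_E ∈ 50 ω_{P,upper}` for every `P ∈ E`. -/
def GenSet.Lacunary {Pcol : Finset Tile} {n : ℤ} (G : GenSet Pcol n) : Prop :=
  ∀ P ∈ G.E, G.ξ ∈ (ωupF n P).dil 50

/-- A generating set is overlapping if `ξ_E ∈ ω̃_P ∖ 50 ω_{P,upper}` for every `P ∈ E`. -/
def GenSet.Overlapping {Pcol : Finset Tile} {n : ℤ} (G : GenSet Pcol n) : Prop :=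
  ∀ P ∈ G.E, G.ξ ∈ ωtl n P \ (ωupF n P).dil 50

/-- The outer measure on `Pcol` generated by the premeasure `E ↦ |I_E|` on generating
sets. -/
def outerμ (Pcol : Finset Tile) (n : ℤ) (A : Finset Tile) : ℝ≥0∞ :=
  ⨅ (Scov : Finset (GenSet Pcol n)) (_ : ∀ P ∈ A, ∃ G ∈ Scov, P ∈ G.E),
    ∑ G ∈ Scov, ENNReal.ofReal G.top.len

/-- The size `S_t` restricted to generating subsets satisfying `pred`:
`S(f)(E) = sup_S (|I_S|^{-1} Σ_{P ∈ S} |f(P)|^t |I_P|)^{1/t}`. -/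
def sizeT (Pcol : Finset Tile) (n : ℤ) (t : ℝ) (pred : GenSet Pcol n → Prop)
    (f : Tile → ℂ) (G : GenSet Pcol n) : ℝ≥0∞ :=
  ⨆ (S : GenSet Pcol n) (_ : pred S) (_ : S.E ⊆ G.E),
    ENNReal.ofReal (((∑ P ∈ S.E, ‖f P‖ ^ t * P.I.len) / S.top.len) ^ (1 / t))

/-- Outer `𝓛^∞` norm with respect to a size `SZ`. -/
def oLinf (Pcol : Finset Tile) (n : ℤ) (SZ : (Tile → ℂ) → GenSet Pcol n → ℝ≥0∞)
    (f : Tile → ℂ) : ℝ≥0∞ :=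
  ⨆ G : GenSet Pcol n, SZ f G

/-- The super-level measure `μ(SZ(f) > λ)`. -/
def levμ (Pcol : Finset Tile) (n : ℤ) (SZ : (Tile → ℂ) → GenSet Pcol n → ℝ≥0∞)
    (f : Tile → ℂ) (lam : ℝ≥0∞) : ℝ≥0∞ :=
  ⨅ (F : Finset Tile)
    (_ : ∀ G : GenSet Pcol n, SZ (fun P => if P ∈ F then 0 else f P) G ≤ lam),
    outerμ Pcol n F

/-- Outer `𝓛^p` norm, `0 < p < ∞`. -/
def oLp (Pcol : Finset Tile) (n : ℤ) (SZ : (Tile → ℂ) → GenSet Pcol n → ℝ≥0∞)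
    (p : ℝ) (f : Tile → ℂ) : ℝ≥0∞ :=
  (ENNReal.ofReal p *
      ∫⁻ t in Set.Ioi (0 : ℝ),
        ENNReal.ofReal (t ^ (p - 1)) * levμ Pcol n SZ f (ENNReal.ofReal t)) ^ (1 / p)

/-- Outer weak `𝓛^{p,∞}` norm, `0 < p < ∞`. -/
def oLpWeak (Pcol : Finset Tile) (n : ℤ) (SZ : (Tile → ℂ) → GenSet Pcol n → ℝ≥0∞)
    (p : ℝ) (f : Tile → ℂ) : ℝ≥0∞ :=
  ⨆ (t : ℝ) (_ : 0 < t),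
    ENNReal.ofReal t * (levμ Pcol n SZ f (ENNReal.ofReal t)) ^ (1 / p)

/-- A family of generating sets is strongly disjoint. -/
def StronglyDisjoint (Pcol : Finset Tile) (n : ℤ) {ι : Type} (E : ι → GenSet Pcol n) : Prop :=
  ∀ i j : ι, i ≠ j → ∀ P₁ ∈ (E i).E, ∀ P₂ ∈ (E j).E,
    (P₁.ω.dil 10 ∩ P₂.ω.dil 10).Nonempty → P₁.I.len ≤ P₂.I.len →
      P₁.I.set ∩ (E j).top.set = ∅

/-- The maximal average `M_N(Pcol, g) = sup_{P ∈ Pcol} |I_P|^{-1} ∫ χ̃_{I_P}^N g`. -/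
def MN (N : ℝ) (Pcol : Finset Tile) (g : ℝ → ℝ) : ℝ≥0∞ :=
  ⨆ P ∈ Pcol, (ENNReal.ofReal P.I.len)⁻¹ * ∫⁻ x : ℝ, ENNReal.ofReal (chit P.I x ^ N * g x)

/-- The embedding map `T₁ f (P) = ⟨f, φ_P⟩`. -/
def T1 (φ : Tile → ℝ → ℂ) (f : ℝ → ℂ) (P : Tile) : ℂ := inn f (φ P)

/-- The modulated cut-off wave packet
`φ̃_{P,j}(x) = φ_P(x) 1_{N_{j-1}(x) ∈ ω_{P,lower}} 1_{N_j(x) ∈ ω_{P,upper}}`. -/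
def phit (φ : Tile → ℝ → ℂ) (Nf : ℕ → ℝ → ℝ) (m n : ℤ) (P : Tile) (j : ℕ) (x : ℝ) : ℂ :=
  φ P x * (if Nf (j - 1) x ∈ ωlowF m P then 1 else 0) *
    (if Nf j x ∈ (ωupF n P).set then 1 else 0)

/-- The embedding map
`T₂ f (P) = ⟨f, Σ_{1 ≤ j ≤ K} d_j φ̃_{P,j} 1_{|I_P| ≤ α_j(·)}⟩`. -/
def T2 (φ : Tile → ℝ → ℂ) (Nf : ℕ → ℝ → ℝ) (m n : ℤ) (K : ℝ → ℕ)
    (d : ℕ → ℝ → ℂ) (α : ℕ → ℝ → ℝ≥0∞) (f : ℝ → ℂ) (P : Tile) : ℂ :=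
  inn f (fun x => ∑ j ∈ Finset.Icc 1 (K x),
    d j x * phit φ Nf m n P j x * (if ENNReal.ofReal P.I.len ≤ α j x then 1 else 0))

/-- The completion `Pcol̄` of a tile collection. -/
def completion (Pcol : Finset Tile) (n : ℤ) : Set Tile :=
  {R : Tile | ∃ P₁ ∈ Pcol, ∃ P₂ ∈ Pcol, P₁.I.set ⊆ R.I.set ∧ R.I.set ⊆ P₂.I.dil 30 ∧
    (ωtl n R ∩ ωtl n P₁).Nonempty ∧ (ωtl n R ∩ ωtl n P₂).Nonempty}

/-- `m_{s,N}(Pcol,(g_j)) = sup_{R ∈ Pcol̄} |I_R|^{-1} ∫ χ̃_{I_R}^N (Σ_{j : N_j ∈ ω̃_R} |g_j|^s)^{1/s}`. -/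
def msN (s N : ℝ) (Pcol : Finset Tile) (n : ℤ) (Nf : ℕ → ℝ → ℝ) (g : ℕ → ℝ → ℂ) : ℝ≥0∞ :=
  ⨆ R ∈ completion Pcol n, (ENNReal.ofReal R.I.len)⁻¹ *
    ∫⁻ x : ℝ, ENNReal.ofReal (chit R.I x ^ N) *
      (∑' j : ℕ, if Nf j x ∈ ωtl n R then (ENNReal.ofReal ‖g j x‖) ^ s else 0) ^ (1 / s)

/-- `m_{∞,N}(Pcol,(g_j)) = sup_{R ∈ Pcol̄} |I_R|^{-1} ∫ χ̃_{I_R}^N sup_{j : N_j ∈ ω̃_R} |g_j|`. -/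
def minfN (N : ℝ) (Pcol : Finset Tile) (n : ℤ) (Nf : ℕ → ℝ → ℝ) (g : ℕ → ℝ → ℂ) : ℝ≥0∞ :=
  ⨆ R ∈ completion Pcol n, (ENNReal.ofReal R.I.len)⁻¹ *
    ∫⁻ x : ℝ, ENNReal.ofReal (chit R.I x ^ N) *
      ⨆ j : ℕ, (if Nf j x ∈ ωtl n R then ENNReal.ofReal ‖g j x‖ else 0)

/-- The variation-norm Carleson expression `V_r(g)`. -/
def Vr (r : ℝ) (Pcol : Finset Tile) (φ : Tile → ℝ → ℂ) (Nf : ℕ → ℝ → ℝ) (m n : ℤ)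
    (K : ℝ → ℕ) (g : Tile → ℂ) (x : ℝ) : ℝ≥0∞ :=
  (∑ j ∈ Finset.Icc 1 (K x),
      (⨆ (α : ℝ) (_ : 0 < α),
        ENNReal.ofReal
          ‖∑ P ∈ Pcol.filter (fun P => P.I.len ≤ α),
              (P.I.len : ℂ) * g P * phit φ Nf m n P j x‖) ^ r) ^ (1 / r)

/-- The standing assumptions: sparseness, wave packets, rigidity. -/
def Setting (C₀ L₁ A : ℝ) (Cw : ℕ → ℝ) (Pcol : Finset Tile) (φ : Tile → ℝ → ℂ)
    (m n : ℤ) : Prop :=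
  Sparse C₀ Pcol ∧ WavePacketFam Pcol φ Cw ∧ RigidParams L₁ A m n ∧ StrictlyBetween m n Pcol

/-- Measurability and monotonicity of the linearizing data. -/
def MeasData (K : ℝ → ℕ) (Nf : ℕ → ℝ → ℝ) : Prop :=
  Measurable K ∧ (∀ j, Measurable (Nf j)) ∧ ∀ x, Monotone fun j => Nf j x

/-- The weak `L^{1,∞}` quasi-norm of a nonnegative function on `ℝ`. -/
def wL1 (g : ℝ → ℝ) : ℝ≥0∞ :=
  ⨆ (t : ℝ) (_ : 0 < t), ENNReal.ofReal t * volume {x : ℝ | t < g x}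

-- auxiliary lemmas
lemma Iv.len_pos (I : Iv) : 0 < I.len := sub_pos.2 I.hlt

lemma Iv.lo_mem (I : Iv) : I.lo ∈ I.set := ⟨le_rfl, I.hlt⟩

lemma Iv.set_nonempty (I : Iv) : I.set.Nonempty := ⟨I.lo, I.lo_mem⟩

lemma Iv.volume_set (I : Iv) : volume I.set = ENNReal.ofReal I.len := by
  simp [Iv.set, Real.volume_Ico, Iv.len]

lemma Iv.subset_iff {I J : Iv} : I.set ⊆ J.set ↔ J.lo ≤ I.lo ∧ I.hi ≤ J.hi :=
  Set.Ico_subset_Ico_iff I.hlt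

lemma Iv.len_le_of_subset {I J : Iv} (h : I.set ⊆ J.set) : I.len ≤ J.len := by
  obtain ⟨h1, h2⟩ := Iv.subset_iff.1 h
  simp only [Iv.len]; linarith

lemma Iv.set_inj {I J : Iv} (h : I.set = J.set) : I = J := by
  obtain ⟨h1, h2⟩ := Iv.subset_iff.1 h.le
  obtain ⟨h3, h4⟩ := Iv.subset_iff.1 h.ge
  cases I; cases J; simp_all
  constructor <;> linarith

lemma dyadic_len {I : Iv} (h : IsDyadic I) : ∃ k : ℤ, I.len = (2:ℝ)^k := by
  obtain ⟨n, k, h1, h2⟩ := h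
  exact ⟨k, by simp only [Iv.len, h1, h2]; ring⟩

lemma dyadic_subset {I J : Iv} (hI : IsDyadic I) (hJ : IsDyadic J)
    (hlen : I.len ≤ J.len) {x : ℝ} (hxI : x ∈ I.set) (hxJ : x ∈ J.set) :
    I.set ⊆ J.set := by
  obtain ⟨n, k, hlo, hhi⟩ := hI
  obtain ⟨m, l, glo, ghi⟩ := hJ
  have hIlen : I.len = (2:ℝ)^k := by simp only [Iv.len, hlo, hhi]; ring
  have hJlen : J.len = (2:ℝ)^l := by simp only [Iv.len, glo, ghi]; ring
  have hk0 : (0:ℝ) < 2^k := zpow_pos (by norm_num) k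
  have hl0 : (0:ℝ) < 2^l := zpow_pos (by norm_num) l
  have hkl : k ≤ l := by
    by_contra hc
    push_neg at hc
    have : (2:ℝ)^l < 2^k := zpow_lt_zpow_right₀ (by norm_num) hc
    rw [hIlen, hJlen] at hlen; linarith
  set d : ℕ := (l - k).toNat with hd
  have hld : l = k + (d:ℤ) := by omega
  have h2l : (2:ℝ)^l = (2:ℝ)^(d:ℕ) * (2:ℝ)^k := by
    rw [hld, zpow_add₀ (by norm_num : (2:ℝ) ≠ 0), zpow_natCast]; ring
  simp only [Iv.set, Set.mem_Ico] at hxI hxJ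
  rw [hlo, hhi] at hxI
  rw [glo, ghi] at hxJ
  rw [h2l] at hxJ
  -- key integer inequalities
  have key1 : (m:ℝ) * 2^d ≤ n := by
    have h1 : ((m * 2^d : ℤ):ℝ) * 2^k < ((n:ℤ) + 1 : ℤ) * 2^k := by
      push_cast
      calc (m:ℝ) * 2^d * 2^k ≤ x := by linarith [hxJ.1]
        _ < ((n:ℝ)+1) * 2^k := hxI.2
    have h2 : (m * 2^d : ℤ) < (n:ℤ) + 1 := by
      have := (mul_lt_mul_iff_of_pos_right hk0).1 h1
      exact_mod_cast this
    have : (m * 2^d : ℤ) ≤ n := by omega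
    exact_mod_cast this
  have key2 : ((n:ℝ) + 1) ≤ ((m:ℝ)+1) * 2^d := by
    have h1 : ((n:ℤ):ℝ) * 2^k < (((m:ℤ)+1) * 2^(d:ℕ) : ℤ) * 2^k := by
      push_cast
      calc (n:ℝ) * 2^k ≤ x := hxI.1
        _ < ((m:ℝ)+1) * 2^d * 2^k := by linarith [hxJ.2]
    have h2 : (n:ℤ) < ((m:ℤ)+1) * 2^(d:ℕ) := by
      have := (mul_lt_mul_iff_of_pos_right hk0).1 h1
      exact_mod_cast this
    have : (n:ℤ) + 1 ≤ ((m:ℤ)+1) * 2^(d:ℕ) := by omega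
    exact_mod_cast this
  intro y hy
  simp only [Iv.set, Set.mem_Ico] at hy ⊢
  rw [hlo, hhi] at hy
  rw [glo, ghi, h2l]
  constructor
  · calc (m:ℝ) * (2^(d:ℕ) * 2^k) = (m:ℝ) * 2^d * 2^k := by ring
      _ ≤ (n:ℝ) * 2^k := by
          exact mul_le_mul_of_nonneg_right key1 hk0.le
      _ ≤ y := hy.1
  · calc y < ((n:ℝ)+1) * 2^k := hy.2
      _ ≤ ((m:ℝ)+1) * 2^d * 2^k := mul_le_mul_of_nonneg_right key2 hk0.le
      _ = ((m:ℝ)+1) * (2^(d:ℕ) * 2^k) := by ring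

lemma dyadic_nested {I J : Iv} (hI : IsDyadic I) (hJ : IsDyadic J) {x : ℝ}
    (hxI : x ∈ I.set) (hxJ : x ∈ J.set) : I.set ⊆ J.set ∨ J.set ⊆ I.set := by
  rcases le_total I.len J.len with h | h
  · exact Or.inl (dyadic_subset hI hJ h hxI hxJ)
  · exact Or.inr (dyadic_subset hJ hI h hxJ hxI)

lemma hull_Ico {a b c d : ℝ} (hab : a < b) (hcd : c < d) (hac : a ≤ c) (hbd : b ≤ d) :
    convexHull ℝ (Set.Ico a b ∪ Set.Ico c d) = Set.Ico a d := by
  apply subset_antisymm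
  · apply convexHull_min _ (convex_Ico a d)
    exact Set.union_subset (Set.Ico_subset_Ico le_rfl hbd) (Set.Ico_subset_Ico hac le_rfl)
  · intro x hx
    rcases lt_or_ge x c with h | h
    · rcases lt_or_ge x b with h2 | h2
      · exact subset_convexHull ℝ _ (Or.inl ⟨hx.1, h2⟩)
      · have hseg : x ∈ segment ℝ a c := by
          rw [segment_eq_Icc hac]; exact ⟨hx.1, h.le⟩
        have ha : a ∈ convexHull ℝ (Set.Ico a b ∪ Set.Ico c d) :=
          subset_convexHull ℝ _ (Set.mem_union_left _ ⟨le_rfl, hab⟩)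
        have hc' : c ∈ convexHull ℝ (Set.Ico a b ∪ Set.Ico c d) :=
          subset_convexHull ℝ _ (Set.mem_union_right _ ⟨le_rfl, hcd⟩)
        exact (convex_convexHull ℝ _).segment_subset ha hc' hseg
    · exact subset_convexHull ℝ _ (Or.inr ⟨h, hx.2⟩)

lemma ωtl_eq (n : ℤ) (P : Tile) (hn : (0:ℝ) ≤ (n:ℝ)) :
    ωtl n P = Set.Ico (P.ω.c - 25 * P.ω.len) (P.ω.c + ((n:ℝ) + 25) * P.ω.len) := by
  have hw : 0 < P.ω.len := P.ω.len_pos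
  have hc : (ωupF n P).c = P.ω.c + (n:ℝ) * P.ω.len := by
    simp only [ωupF, Iv.trans, Iv.c]; ring
  have hl : (ωupF n P).len = P.ω.len := by
    simp only [ωupF, Iv.trans, Iv.len]; ring
  unfold ωtl Iv.dil
  rw [hc, hl]
  rw [show P.ω.c - 50 * P.ω.len / 2 = P.ω.c - 25 * P.ω.len by ring,
    show P.ω.c + 50 * P.ω.len / 2 = P.ω.c + 25 * P.ω.len by ring,
    show P.ω.c + (n:ℝ) * P.ω.len - 50 * P.ω.len / 2 = P.ω.c + ((n:ℝ) - 25) * P.ω.len by ring,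
    show P.ω.c + (n:ℝ) * P.ω.len + 50 * P.ω.len / 2 = P.ω.c + ((n:ℝ) + 25) * P.ω.len by ring]
  apply hull_Ico <;> nlinarith

lemma exists_maximal_iv (𝒞 : Finset Iv) :
    ∀ J ∈ 𝒞, ∃ K ∈ 𝒞, J.set ⊆ K.set ∧ ∀ K' ∈ 𝒞, K.set ⊆ K'.set → K' = K := by
  suffices H : ∀ N : ℕ, ∀ J ∈ 𝒞, (𝒞.filter fun K => ¬ K.set ⊆ J.set).card ≤ N →
      ∃ K ∈ 𝒞, J.set ⊆ K.set ∧ ∀ K' ∈ 𝒞, K.set ⊆ K'.set → K' = K by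
    intro J hJ
    exact H _ J hJ le_rfl
  intro N
  induction N with
  | zero =>
    intro J hJ hcard
    refine ⟨J, hJ, subset_rfl, ?_⟩
    intro K' hK' hsub
    by_contra hne
    have h1 : ¬ K'.set ⊆ J.set := by
      intro h
      exact hne (Iv.set_inj (subset_antisymm h hsub))
    have : K' ∈ 𝒞.filter fun K => ¬ K.set ⊆ J.set := Finset.mem_filter.2 ⟨hK', h1⟩
    have := Finset.card_pos.2 ⟨K', this⟩
    omega
  | succ N ih =>
    intro J hJ hcard
    by_cases hmax : ∀ K' ∈ 𝒞, J.set ⊆ K'.set → K' = J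
    · exact ⟨J, hJ, subset_rfl, hmax⟩
    · push_neg at hmax
      obtain ⟨K', hK', hsub, hne⟩ := hmax
      have hK'mem : K' ∈ 𝒞.filter fun K => ¬ K.set ⊆ J.set := by
        refine Finset.mem_filter.2 ⟨hK', fun h => hne (Iv.set_inj (subset_antisymm h hsub))⟩
      have hstep : (𝒞.filter fun K => ¬ K.set ⊆ K'.set) ⊆
          (𝒞.filter fun K => ¬ K.set ⊆ J.set).erase K' := by
        intro K hK
        rw [Finset.mem_filter] at hK
        refine Finset.mem_erase.2 ⟨?_, Finset.mem_filter.2 ⟨hK.1, ?_⟩⟩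
        · rintro rfl; exact hK.2 subset_rfl
        · intro h; exact hK.2 (h.trans hsub)
      have hc2 : (𝒞.filter fun K => ¬ K.set ⊆ K'.set).card ≤ N := by
        have := Finset.card_le_card hstep
        rw [Finset.card_erase_of_mem hK'mem] at this
        omega
      obtain ⟨K, hK, hsub2, hmax2⟩ := ih K' hK' hc2
      exact ⟨K, hK, hsub.trans hsub2, hmax2⟩

/-- The square function associated to coefficients `a` and a tile family `F`. -/
def gfun (a : Tile → ℝ) (F : Finset Tile) (x : ℝ) : ℝ :=
  Real.sqrt (∑ Q ∈ F, a Q ^ 2 * Set.indicator Q.I.set (fun _ => (1:ℝ)) x)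

lemma wL1_ge (g : ℝ → ℝ) {t : ℝ} (ht : 0 < t) :
    ENNReal.ofReal t * volume {x | t < g x} ≤ wL1 g :=
  le_iSup₂ (f := fun (t : ℝ) (_ : 0 < t) => ENNReal.ofReal t * volume {x | t < g x}) t ht

lemma coeff_le (a : Tile → ℝ) (Q : Tile) (ha : 0 ≤ a Q) (W : ℝ) (hW : 0 ≤ W)
    (h : wL1 (gfun a {Q}) ≤ ENNReal.ofReal (W * Q.I.len)) : a Q ≤ W := by
  by_contra hgt
  push_neg at hgt
  set t := (W + a Q) / 2 with ht
  have htpos : 0 < t := by rw [ht]; linarith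
  have htlt : t < a Q := by rw [ht]; linarith
  have hsub : Q.I.set ⊆ {x | t < gfun a {Q} x} := by
    intro x hx
    have : gfun a {Q} x = a Q := by
      rw [gfun, Finset.sum_singleton, Set.indicator_of_mem hx, mul_one, Real.sqrt_sq ha]
    simpa [this] using htlt
  have h1 : ENNReal.ofReal t * volume Q.I.set ≤ wL1 (gfun a {Q}) :=
    le_trans (mul_le_mul_right (measure_mono hsub) _) (wL1_ge _ htpos)
  rw [Iv.volume_set, ← ENNReal.ofReal_mul htpos.le] at h1
  have h2 : t * Q.I.len ≤ W * Q.I.len :=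
    (ENNReal.ofReal_le_ofReal_iff (mul_nonneg hW Q.I.len_pos.le)).1 (h1.trans h)
  have := (mul_le_mul_iff_of_pos_right Q.I.len_pos).1 h2
  linarith

lemma jn (a : Tile → ℝ) (ha : ∀ Q, 0 ≤ a Q) (W : ℝ) (hW : 0 ≤ W) :
    ∀ N : ℕ, ∀ T : Finset Tile, T.card ≤ N →
    (∀ Q ∈ T, ∀ Q' ∈ T, Q.I = Q'.I → Q = Q') →
    (∀ J : Iv, IsDyadic J → ∀ F ⊆ T, F.Nonempty → (∀ Q ∈ F, Q.I.set ⊆ J.set) →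
      wL1 (gfun a F) ≤ ENNReal.ofReal (W * J.len)) →
    ∀ I₀ : Iv, IsDyadic I₀ → (∀ Q ∈ T, Q.I.set ⊆ I₀.set) →
    ∑ Q ∈ T, a Q ^ 2 * Q.I.len ≤ 32 * W ^ 2 * I₀.len := by
  intro N
  induction N with
  | zero =>
    intro T hcard _ _ I₀ hI₀dy _
    have hT : T = ∅ := Finset.card_eq_zero.1 (le_antisymm hcard (Nat.zero_le _))
    subst hT
    simp only [Finset.sum_empty]
    have := I₀.len_pos
    positivity
  | succ N ih =>
    intro T hcard hinj hloc I₀ hI₀dy hI₀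
    have hL0 := I₀.len_pos
    rcases Finset.eq_empty_or_nonempty T with rfl | hTne
    · simp only [Finset.sum_empty]; positivity
    have haW : ∀ Q ∈ T, a Q ≤ W := by
      intro Q hQ
      refine coeff_le a Q (ha Q) W hW (hloc Q.I Q.dyI {Q}
        (Finset.singleton_subset_iff.2 hQ) ⟨Q, Finset.mem_singleton_self Q⟩ ?_)
      intro Q' hQ'
      rw [Finset.mem_singleton] at hQ'
      subst hQ'
      exact subset_rfl
    rcases eq_or_lt_of_le hW with hW0 | hWpos
    · have hz : ∀ Q ∈ T, a Q = 0 := fun Q hQ => le_antisymm (hW0 ▸ haW Q hQ) (ha Q)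
      have : ∑ Q ∈ T, a Q ^ 2 * Q.I.len = 0 :=
        Finset.sum_eq_zero fun Q hQ => by rw [hz Q hQ]; ring
      rw [this]; positivity
    -- main case : W > 0
    set lam : ℝ := 4 * W with hlam
    have hlampos : 0 < lam := by rw [hlam]; linarith
    set crs : Iv → ℝ :=
      fun J => ∑ Q ∈ T.filter (fun Q => J.set ⊆ Q.I.set ∧ ¬ Q.I.set ⊆ J.set), a Q ^ 2
      with hcrs
    set 𝒞 : Finset Iv := (T.image fun Q => Q.I).filter (fun J => lam ^ 2 < crs J) with h𝒞
    set 𝒥 : Finset Iv := 𝒞.filter (fun J => ∀ K ∈ 𝒞, J.set ⊆ K.set → K = J) with h𝒥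
    have h𝒥sub : 𝒥 ⊆ 𝒞 := Finset.filter_subset _ _
    have hdy𝒞 : ∀ J ∈ 𝒞, IsDyadic J := by
      intro J hJ
      rw [h𝒞, Finset.mem_filter, Finset.mem_image] at hJ
      obtain ⟨⟨Q, _, rfl⟩, -⟩ := hJ
      exact Q.dyI
    have hmaxreach : ∀ J ∈ 𝒞, ∃ K ∈ 𝒥, J.set ⊆ K.set := by
      intro J hJ
      obtain ⟨K, hK, hsub, hmax⟩ := exists_maximal_iv 𝒞 J hJ
      exact ⟨K, Finset.mem_filter.2 ⟨hK, hmax⟩, hsub⟩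
    have hdisj : ∀ J ∈ 𝒥, ∀ K ∈ 𝒥, J ≠ K → Disjoint J.set K.set := by
      intro J hJ K hK hne
      by_contra hc
      rw [Set.not_disjoint_iff] at hc
      obtain ⟨x, hxJ, hxK⟩ := hc
      rcases dyadic_nested (hdy𝒞 J (h𝒥sub hJ)) (hdy𝒞 K (h𝒥sub hK)) hxJ hxK with h | h
      · exact hne ((Finset.mem_filter.1 hJ).2 K (h𝒥sub hK) h).symm
      · exact hne ((Finset.mem_filter.1 hK).2 J (h𝒥sub hJ) h)
    set p : Tile → Prop := fun Q => ∃ J ∈ 𝒥, Q.I.set ⊆ J.set with hp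
    -- pointwise bound for the tiles avoiding all stopping intervals
    have hkey : ∀ x : ℝ,
        ∑ Q ∈ T.filter (fun Q => ¬ p Q), a Q ^ 2 * Set.indicator Q.I.set (fun _ => (1:ℝ)) x
          ≤ 17 * W ^ 2 := by
      intro x
      set Tout := T.filter (fun Q => ¬ p Q) with hTout
      set Tx := Tout.filter (fun Q => x ∈ Q.I.set) with hTx
      have hsumx : ∑ Q ∈ Tout, a Q ^ 2 * Set.indicator Q.I.set (fun _ => (1:ℝ)) x
          = ∑ Q ∈ Tx, a Q ^ 2 :=
        calc ∑ Q ∈ Tout, a Q ^ 2 * Set.indicator Q.I.set (fun _ => (1:ℝ)) x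
            = ∑ Q ∈ Tout, (if x ∈ Q.I.set then a Q ^ 2 else 0) := by
              apply Finset.sum_congr rfl
              intro Q _
              by_cases hx : x ∈ Q.I.set
              · simp [Set.indicator_of_mem hx, hx]
              · simp [Set.indicator_of_notMem hx, hx]
          _ = ∑ Q ∈ Tx, a Q ^ 2 := (Finset.sum_filter _ _).symm
      rw [hsumx]
      rcases Finset.eq_empty_or_nonempty Tx with hTxe | hTxne
      · rw [hTxe, Finset.sum_empty]; positivity
      obtain ⟨Qm, hQm, hQmin⟩ := Finset.exists_min_image Tx (fun Q => Q.I.len) hTxne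
      have hQmTout : Qm ∈ Tout := (Finset.mem_filter.1 hQm).1
      have hQmT : Qm ∈ T := (Finset.mem_filter.1 hQmTout).1
      have hQmx : x ∈ Qm.I.set := (Finset.mem_filter.1 hQm).2
      have hchain : ∀ Q ∈ Tx, Qm.I.set ⊆ Q.I.set := by
        intro Q hQ
        exact dyadic_subset Qm.dyI Q.dyI (hQmin Q hQ) hQmx (Finset.mem_filter.1 hQ).2
      have hsplit : ∑ Q ∈ Tx, a Q ^ 2 = a Qm ^ 2 + ∑ Q ∈ Tx.erase Qm, a Q ^ 2 :=
        (Finset.add_sum_erase Tx _ hQm).symm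
      have herase : ∑ Q ∈ Tx.erase Qm, a Q ^ 2 ≤ crs Qm.I := by
        apply Finset.sum_le_sum_of_subset_of_nonneg ?_ (fun i _ _ => sq_nonneg _)
        intro Q hQ
        rw [Finset.mem_erase] at hQ
        obtain ⟨hne, hQTx⟩ := hQ
        have hQT : Q ∈ T := (Finset.mem_filter.1 ((Finset.mem_filter.1 hQTx).1)).1
        refine Finset.mem_filter.2 ⟨hQT, hchain Q hQTx, ?_⟩
        intro hcc
        exact hne (hinj Q hQT Qm hQmT (Iv.set_inj (subset_antisymm hcc (hchain Q hQTx))))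
      have hcrsle : crs Qm.I ≤ lam ^ 2 := by
        by_contra hgt
        push_neg at hgt
        have hmem𝒞 : Qm.I ∈ 𝒞 :=
          Finset.mem_filter.2 ⟨Finset.mem_image_of_mem _ hQmT, hgt⟩
        obtain ⟨K, hK, hsubK⟩ := hmaxreach _ hmem𝒞
        exact (Finset.mem_filter.1 hQmTout).2 ⟨K, hK, hsubK⟩
      have haQm : a Qm ^ 2 ≤ W ^ 2 := pow_le_pow_left₀ (ha Qm) (haW Qm hQmT) 2
      have hlamsq : lam ^ 2 = 16 * W ^ 2 := by rw [hlam]; ring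
      linarith [hsplit, herase, hcrsle, haQm]
    -- integrate the pointwise bound
    have hout : ∑ Q ∈ T.filter (fun Q => ¬ p Q), a Q ^ 2 * Q.I.len ≤ 17 * W ^ 2 * I₀.len := by
      set Tout := T.filter (fun Q => ¬ p Q) with hTout
      have hmeasQ : ∀ Q : Tile, MeasurableSet Q.I.set := fun Q => measurableSet_Ico
      have indeq : ∀ (Q : Tile) (x : ℝ),
          Set.indicator Q.I.set (fun _ => ENNReal.ofReal (a Q ^ 2)) x
            = ENNReal.ofReal (a Q ^ 2 * Set.indicator Q.I.set (fun _ => (1:ℝ)) x) := by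
        intro Q x
        by_cases hx : x ∈ Q.I.set <;> simp [hx]
      have hptwise : ∀ x : ℝ,
          ∑ Q ∈ Tout, Set.indicator Q.I.set (fun _ => ENNReal.ofReal (a Q ^ 2)) x
            ≤ Set.indicator I₀.set (fun _ => ENNReal.ofReal (17 * W ^ 2)) x := by
        intro x
        have e1 : ∑ Q ∈ Tout, Set.indicator Q.I.set (fun _ => ENNReal.ofReal (a Q ^ 2)) x
            = ENNReal.ofReal (∑ Q ∈ Tout, a Q ^ 2 * Set.indicator Q.I.set (fun _ => (1:ℝ)) x) := by
          rw [ENNReal.ofReal_sum_of_nonneg]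
          · exact Finset.sum_congr rfl fun Q _ => indeq Q x
          · intro Q _
            exact mul_nonneg (sq_nonneg _) (Set.indicator_nonneg (fun _ _ => zero_le_one) x)
        rw [e1]
        by_cases hx : x ∈ I₀.set
        · rw [Set.indicator_of_mem hx]
          exact ENNReal.ofReal_le_ofReal (hkey x)
        · rw [Set.indicator_of_notMem hx]
          have : ∑ Q ∈ Tout, a Q ^ 2 * Set.indicator Q.I.set (fun _ => (1:ℝ)) x = 0 := by
            apply Finset.sum_eq_zero
            intro Q hQ
            have hQT : Q ∈ T := (Finset.mem_filter.1 hQ).1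
            have : x ∉ Q.I.set := fun h => hx (hI₀ Q hQT h)
            rw [Set.indicator_of_notMem this, mul_zero]
          rw [this, ENNReal.ofReal_zero]
      have hchain2 : ENNReal.ofReal (∑ Q ∈ Tout, a Q ^ 2 * Q.I.len)
          ≤ ENNReal.ofReal (17 * W ^ 2 * I₀.len) := by
        calc ENNReal.ofReal (∑ Q ∈ Tout, a Q ^ 2 * Q.I.len)
            = ∑ Q ∈ Tout, ENNReal.ofReal (a Q ^ 2 * Q.I.len) :=
              ENNReal.ofReal_sum_of_nonneg fun Q _ => mul_nonneg (sq_nonneg _) Q.I.len_pos.le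
          _ = ∑ Q ∈ Tout, ∫⁻ x, Set.indicator Q.I.set (fun _ => ENNReal.ofReal (a Q ^ 2)) x := by
              apply Finset.sum_congr rfl
              intro Q _
              rw [lintegral_indicator_const (hmeasQ Q), Iv.volume_set,
                ← ENNReal.ofReal_mul (sq_nonneg _)]
          _ = ∫⁻ x, ∑ Q ∈ Tout, Set.indicator Q.I.set (fun _ => ENNReal.ofReal (a Q ^ 2)) x :=
              (lintegral_finset_sum _ fun Q _ => measurable_const.indicator (hmeasQ Q)).symm
          _ ≤ ∫⁻ x, Set.indicator I₀.set (fun _ => ENNReal.ofReal (17 * W ^ 2)) x :=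
              lintegral_mono hptwise
          _ = ENNReal.ofReal (17 * W ^ 2) * ENNReal.ofReal I₀.len := by
              have hms : MeasurableSet I₀.set := measurableSet_Ico
              rw [lintegral_indicator_const hms, Iv.volume_set]
          _ = ENNReal.ofReal (17 * W ^ 2 * I₀.len) := by
              rw [← ENNReal.ofReal_mul (by positivity)]
      exact (ENNReal.ofReal_le_ofReal_iff (by positivity)).1 hchain2
    -- the stopping intervals localize
    set TJ : Iv → Finset Tile := fun J => T.filter (fun Q => Q.I.set ⊆ J.set) with hTJ
    have hTinEq : T.filter p = 𝒥.biUnion TJ := by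
      ext Q
      simp only [Finset.mem_filter, Finset.mem_biUnion, hTJ, hp]
      tauto
    have hTJdisj : (↑𝒥 : Set Iv).PairwiseDisjoint TJ := by
      intro J hJ K hK hne
      rw [Function.onFun, Finset.disjoint_left]
      intro Q hQJ hQK
      have h1 : Q.I.set ⊆ J.set := (Finset.mem_filter.1 hQJ).2
      have h2 : Q.I.set ⊆ K.set := (Finset.mem_filter.1 hQK).2
      exact Set.disjoint_left.1 (hdisj J (Finset.mem_coe.1 hJ) K (Finset.mem_coe.1 hK) hne)
        (h1 Q.I.lo_mem) (h2 Q.I.lo_mem)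
    have hcrspos : ∀ J ∈ 𝒥, ∃ Q₁ ∈ T, J.set ⊆ Q₁.I.set ∧ ¬ Q₁.I.set ⊆ J.set := by
      intro J hJ
      have h1 : lam ^ 2 < crs J := (Finset.mem_filter.1 (h𝒥sub hJ)).2
      by_contra hno
      push_neg at hno
      have he : T.filter (fun Q => J.set ⊆ Q.I.set ∧ ¬ Q.I.set ⊆ J.set) = ∅ := by
        rw [Finset.filter_eq_empty_iff]
        intro Q hQ hcond
        exact hcond.2 (hno Q hQ hcond.1)
      rw [hcrs] at h1
      simp only [he, Finset.sum_empty] at h1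
      nlinarith
    have hrec : ∀ J ∈ 𝒥, ∑ Q ∈ TJ J, a Q ^ 2 * Q.I.len ≤ 32 * W ^ 2 * J.len := by
      intro J hJ
      obtain ⟨Q₁, hQ₁T, _, hnsub1⟩ := hcrspos J hJ
      have hQ₁not : Q₁ ∉ TJ J := fun h => hnsub1 (Finset.mem_filter.1 h).2
      have hcard' : (TJ J).card ≤ N := by
        have h1 : TJ J ⊆ T.erase Q₁ := by
          intro Q hQ
          exact Finset.mem_erase.2 ⟨fun he => hQ₁not (he ▸ hQ), (Finset.mem_filter.1 hQ).1⟩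
        have := Finset.card_le_card h1
        rw [Finset.card_erase_of_mem hQ₁T] at this
        omega
      exact ih (TJ J) hcard'
        (fun Q hQ Q' hQ' hII => hinj Q (Finset.mem_of_mem_filter Q hQ) Q'
          (Finset.mem_of_mem_filter Q' hQ') hII)
        (fun J' hJ' F hF hFne hFJ' =>
          hloc J' hJ' F (hF.trans (Finset.filter_subset _ _)) hFne hFJ')
        J (hdy𝒞 J (h𝒥sub hJ)) (fun Q hQ => (Finset.mem_filter.1 hQ).2)
    -- total length of stopping intervals
    have hsumlen : ∑ J ∈ 𝒥, J.len ≤ I₀.len / 4 := by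
      have hpd : ((↑𝒥 : Set Iv)).PairwiseDisjoint Iv.set := by
        intro J hJ K hK hne
        exact hdisj J (Finset.mem_coe.1 hJ) K (Finset.mem_coe.1 hK) hne
      have hvol : volume (⋃ J ∈ 𝒥, Iv.set J) = ∑ J ∈ 𝒥, ENNReal.ofReal J.len := by
        rw [measure_biUnion_finset hpd (fun J _ => (measurableSet_Ico : MeasurableSet J.set))]
        exact Finset.sum_congr rfl fun J _ => Iv.volume_set J
      have hunion : (⋃ J ∈ 𝒥, Iv.set J) ⊆ {x | lam < gfun a T x} := by
        intro x hx
        rw [Set.mem_iUnion₂] at hx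
        obtain ⟨J, hJ, hxJ⟩ := hx
        have h1 : lam ^ 2 < crs J := (Finset.mem_filter.1 (h𝒥sub hJ)).2
        have h2 : crs J ≤ ∑ Q ∈ T, a Q ^ 2 * Set.indicator Q.I.set (fun _ => (1:ℝ)) x := by
          rw [hcrs]
          calc ∑ Q ∈ T.filter (fun Q => J.set ⊆ Q.I.set ∧ ¬ Q.I.set ⊆ J.set), a Q ^ 2
              = ∑ Q ∈ T.filter (fun Q => J.set ⊆ Q.I.set ∧ ¬ Q.I.set ⊆ J.set),
                  a Q ^ 2 * Set.indicator Q.I.set (fun _ => (1:ℝ)) x := by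
                apply Finset.sum_congr rfl
                intro Q hQ
                rw [Set.indicator_of_mem ((Finset.mem_filter.1 hQ).2.1 hxJ), mul_one]
            _ ≤ _ := Finset.sum_le_sum_of_subset_of_nonneg (Finset.filter_subset _ _)
                (fun Q _ _ => mul_nonneg (sq_nonneg _)
                  (Set.indicator_nonneg (fun _ _ => zero_le_one) x))
        show lam < gfun a T x
        rw [gfun]
        exact (Real.lt_sqrt hlampos.le).2 (lt_of_lt_of_le h1 h2)
      have hwb : ENNReal.ofReal lam * volume (⋃ J ∈ 𝒥, Iv.set J)
          ≤ ENNReal.ofReal (W * I₀.len) := by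
        refine le_trans ?_ (hloc I₀ hI₀dy T subset_rfl hTne hI₀)
        exact le_trans (mul_le_mul_right (measure_mono hunion) _) (wL1_ge _ hlampos)
      rw [hvol] at hwb
      have hw2 : ENNReal.ofReal (lam * ∑ J ∈ 𝒥, J.len) ≤ ENNReal.ofReal (W * I₀.len) := by
        rw [ENNReal.ofReal_mul hlampos.le,
          ENNReal.ofReal_sum_of_nonneg (fun J _ => J.len_pos.le)]
        exact hwb
      have hw3 : lam * ∑ J ∈ 𝒥, J.len ≤ W * I₀.len :=
        (ENNReal.ofReal_le_ofReal_iff (by positivity)).1 hw2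
      rw [hlam] at hw3
      nlinarith
    -- combine
    have hsplitT : ∑ Q ∈ T, a Q ^ 2 * Q.I.len
        = ∑ Q ∈ T.filter p, a Q ^ 2 * Q.I.len
          + ∑ Q ∈ T.filter (fun Q => ¬ p Q), a Q ^ 2 * Q.I.len :=
      (Finset.sum_filter_add_sum_filter_not T p _).symm
    have hin : ∑ Q ∈ T.filter p, a Q ^ 2 * Q.I.len ≤ 8 * W ^ 2 * I₀.len := by
      rw [hTinEq, Finset.sum_biUnion hTJdisj]
      calc ∑ J ∈ 𝒥, ∑ Q ∈ TJ J, a Q ^ 2 * Q.I.len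
          ≤ ∑ J ∈ 𝒥, 32 * W ^ 2 * J.len := Finset.sum_le_sum hrec
        _ = 32 * W ^ 2 * ∑ J ∈ 𝒥, J.len := by rw [Finset.mul_sum]
        _ ≤ 32 * W ^ 2 * (I₀.len / 4) := by
            apply mul_le_mul_of_nonneg_left hsumlen (by positivity)
        _ = 8 * W ^ 2 * I₀.len := by ring
    have hpos : 0 ≤ W ^ 2 * I₀.len := by positivity
    linarith [hsplitT, hin, hout]

lemma tile_ext {P Q : Tile} (hI : P.I = Q.I) (hω : P.ω = Q.ω) : P = Q := by
  cases P; cases Q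
  simp only at hI hω
  subst hI; subst hω
  rfl

lemma mem_dil_up_iff {nn : ℤ} {P : Tile} {ξ : ℝ} :
    ξ ∈ (ωupF nn P).dil 50 ↔
      P.ω.c + (nn:ℝ) * P.ω.len - 25 * P.ω.len ≤ ξ ∧
        ξ < P.ω.c + (nn:ℝ) * P.ω.len + 25 * P.ω.len := by
  simp only [ωupF, Iv.dil, Iv.trans, Iv.c, Iv.len, Set.mem_Ico]
  constructor <;> intro h <;> exact ⟨by linarith [h.1, h.2], by linarith [h.1, h.2]⟩

lemma lac_inj {C₀ : ℝ} (hC₀ : 100 ≤ C₀) {Pcol : Finset Tile} (hsp : Sparse C₀ Pcol)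
    {nn : ℤ} (S : GenSet Pcol nn) (hS : S.Lacunary) :
    ∀ P ∈ S.E, ∀ Q ∈ S.E, P.I = Q.I → P = Q := by
  intro P hP Q hQ hII
  have hPp : P ∈ Pcol := S.sub hP
  have hQp : Q ∈ Pcol := S.sub hQ
  have hlen : P.I.len = Q.I.len := by rw [hII]
  have hlp := P.I.len_pos
  have hsp' := hsp P hPp Q hQp
    (by rw [← hlen]; exact div_le_self hlp.le (by linarith)) hlen.le
  rcases hsp'.2 with hω | hdisj
  · exact tile_ext hII hω
  · exfalso
    have hwP := P.ω.len_pos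
    have hw : P.ω.len = Q.ω.len := by
      have h1 : P.I.len * P.ω.len = 1 := P.area
      have h2 : Q.I.len * Q.ω.len = 1 := Q.area
      rw [← hlen] at h2
      exact mul_left_cancel₀ (ne_of_gt hlp) (h1.trans h2.symm)
    obtain ⟨hP1, hP2⟩ := mem_dil_up_iff.1 (hS P hP)
    obtain ⟨hQ1, hQ2⟩ := mem_dil_up_iff.1 (hS Q hQ)
    rw [← hw] at hQ1 hQ2
    set z := (P.ω.c + Q.ω.c) / 2 with hz
    have hzP : z ∈ P.ω.dil C₀ := by
      simp only [Iv.dil, Set.mem_Ico, hz]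
      constructor <;> nlinarith
    have hzQ : z ∈ Q.ω.dil C₀ := by
      simp only [Iv.dil, Set.mem_Ico, hz]
      have hwq : Q.ω.len = P.ω.len := hw.symm
      rw [hwq]
      constructor <;> nlinarith
    have : z ∈ P.ω.dil C₀ ∩ Q.ω.dil C₀ := ⟨hzP, hzQ⟩
    rw [hdisj] at this
    exact this

/-- The "good" tiles: those whose upper interval leaves room to the right of `ξ`. -/
def goodT (ξ : ℝ) (nn : ℤ) (Q : Tile) : Prop :=
  ξ + Q.ω.len / 2 ≤ Q.ω.c + (nn:ℝ) * Q.ω.len + 25 * Q.ω.len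

lemma mkGen {Pcol : Finset Tile} {nn : ℤ} (S : GenSet Pcol nn) (hS : S.Lacunary)
    (hn : (1:ℝ) ≤ (nn:ℝ)) (J : Iv) (hJdy : IsDyadic J) (F : Finset Tile)
    (hF : F ⊆ S.E) (hFne : F.Nonempty) (hFJ : ∀ Q ∈ F, Q.I.set ⊆ J.set)
    (hcase : (∀ Q ∈ F, goodT S.ξ nn Q) ∨ (∀ Q ∈ F, ¬ goodT S.ξ nn Q)) :
    ∃ G : GenSet Pcol nn, G.Lacunary ∧ G.E = F ∧ G.top = J := by
  have hJpos : 0 < J.len := J.len_pos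
  have hδpos : 0 < 1 / (2 * J.len) := by positivity
  have hfacts : ∀ Q ∈ F, 0 < Q.ω.len ∧ 1 / J.len ≤ Q.ω.len ∧
      (Q.ω.c + (nn:ℝ) * Q.ω.len - 25 * Q.ω.len ≤ S.ξ ∧
        S.ξ < Q.ω.c + (nn:ℝ) * Q.ω.len + 25 * Q.ω.len) := by
    intro Q hQ
    have hw := Q.ω.len_pos
    have hl := Q.I.len_pos
    have hlJ : Q.I.len ≤ J.len := Iv.len_le_of_subset (hFJ Q hQ)
    have hwl : Q.ω.len = 1 / Q.I.len := by
      rw [eq_div_iff (ne_of_gt hl), mul_comm]; exact Q.area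
    have h1J : 1 / J.len ≤ 1 / Q.I.len := one_div_le_one_div_of_le hl hlJ
    exact ⟨hw, by rw [hwl]; exact h1J, mem_dil_up_iff.1 (hS Q (hF hQ))⟩
  rcases hcase with hgood | hbad
  · refine ⟨⟨F, hF.trans S.sub, hFne, J, hJdy, S.ξ, hFJ, ?_⟩, ?_, rfl, rfl⟩
    · intro Q hQ
      obtain ⟨hw, hδ, hup1, hup2⟩ := hfacts Q hQ
      have hg := hgood Q hQ
      unfold goodT at hg
      have hnw : Q.ω.len ≤ (nn:ℝ) * Q.ω.len := le_mul_of_one_le_left hw.le hn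
      have hhalf : 1 / (2 * J.len) ≤ Q.ω.len / 2 := by
        rw [show (1:ℝ) / (2 * J.len) = (1 / J.len) / 2 by ring]
        linarith
      rw [ωtl_eq nn Q (by linarith)]
      intro y hy
      obtain ⟨hy1, hy2⟩ := hy
      constructor
      · have : ((nn:ℝ) + 25) * Q.ω.len = (nn:ℝ) * Q.ω.len + 25 * Q.ω.len := by ring
        linarith
      · have : ((nn:ℝ) + 25) * Q.ω.len = (nn:ℝ) * Q.ω.len + 25 * Q.ω.len := by ring
        linarith
    · intro Q hQ
      exact hS Q (hF hQ)
  · refine ⟨⟨F, hF.trans S.sub, hFne, J, hJdy, S.ξ - 1 / (2 * J.len), hFJ, ?_⟩, ?_, rfl, rfl⟩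
    · intro Q hQ
      obtain ⟨hw, hδ, hup1, hup2⟩ := hfacts Q hQ
      have hb := hbad Q hQ
      unfold goodT at hb
      push_neg at hb
      have hnw : Q.ω.len ≤ (nn:ℝ) * Q.ω.len := le_mul_of_one_le_left hw.le hn
      have hhalf : 1 / (2 * J.len) ≤ Q.ω.len / 2 := by
        rw [show (1:ℝ) / (2 * J.len) = (1 / J.len) / 2 by ring]
        linarith
      rw [ωtl_eq nn Q (by linarith)]
      intro y hy
      obtain ⟨hy1, hy2⟩ := hy
      have hexp : ((nn:ℝ) + 25) * Q.ω.len = (nn:ℝ) * Q.ω.len + 25 * Q.ω.len := by ring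
      constructor
      · linarith
      · linarith
    · intro Q hQ
      obtain ⟨hw, hδ, hup1, hup2⟩ := hfacts Q hQ
      have hb := hbad Q hQ
      unfold goodT at hb
      push_neg at hb
      have hnw : Q.ω.len ≤ (nn:ℝ) * Q.ω.len := le_mul_of_one_le_left hw.le hn
      have hhalf : 1 / (2 * J.len) ≤ Q.ω.len / 2 := by
        rw [show (1:ℝ) / (2 * J.len) = (1 / J.len) / 2 by ring]
        linarith
      rw [mem_dil_up_iff]
      constructor
      · linarith
      · linarith

lemma perS {C₀ : ℝ} (hC₀ : 100 ≤ C₀) {Pcol : Finset Tile} (hsp : Sparse C₀ Pcol)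
    {nn : ℤ} (hn : (100:ℝ) ≤ (nn:ℝ)) (φ : Tile → ℝ → ℂ) (f : ℝ → ℂ)
    (S : GenSet Pcol nn) (hS : S.Lacunary) :
    ENNReal.ofReal (((∑ P ∈ S.E, ‖T1 φ f P‖ ^ (2:ℝ) * P.I.len) / S.top.len) ^ (1 / (2:ℝ)))
      ≤ ENNReal.ofReal 8 *
        ⨆ (G : GenSet Pcol nn) (_ : G.Lacunary),
          (ENNReal.ofReal G.top.len)⁻¹ *
            wL1 (fun x => Real.sqrt
              (∑ P ∈ G.E, ‖T1 φ f P‖ ^ 2 *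
                Set.indicator P.I.set (fun _ => (1 : ℝ)) x)) := by
  set We := ⨆ (G : GenSet Pcol nn) (_ : G.Lacunary),
      (ENNReal.ofReal G.top.len)⁻¹ *
        wL1 (fun x => Real.sqrt
          (∑ P ∈ G.E, ‖T1 φ f P‖ ^ 2 *
            Set.indicator P.I.set (fun _ => (1 : ℝ)) x)) with hWedef
  by_cases htop : We = ⊤
  · rw [htop, ENNReal.mul_top (by simp [ENNReal.ofReal_eq_zero] : ENNReal.ofReal 8 ≠ 0)]
    exact le_top
  set W : ℝ := We.toReal with hWdef
  have hW0 : 0 ≤ W := ENNReal.toReal_nonneg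
  have hWeq : ENNReal.ofReal W = We := ENNReal.ofReal_toReal htop
  have hinj := lac_inj hC₀ hsp S hS
  have hLpos := S.top.len_pos
  -- localizability for the good/bad families
  have hlocAll : ∀ F₀ : Finset Tile,
      (F₀ = S.E.filter (goodT S.ξ nn) ∨ F₀ = S.E.filter (fun Q => ¬ goodT S.ξ nn Q)) →
      ∀ J : Iv, IsDyadic J → ∀ F ⊆ F₀, F.Nonempty → (∀ Q ∈ F, Q.I.set ⊆ J.set) →
      wL1 (gfun (fun P => ‖T1 φ f P‖) F) ≤ ENNReal.ofReal (W * J.len) := by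
    intro F₀ hF₀ J hJdy F hFsub hFne hFJ
    have hFS : F ⊆ S.E := hFsub.trans
      (by rcases hF₀ with rfl | rfl <;> exact Finset.filter_subset _ _)
    have hcase : (∀ Q ∈ F, goodT S.ξ nn Q) ∨ (∀ Q ∈ F, ¬ goodT S.ξ nn Q) := by
      rcases hF₀ with rfl | rfl
      · exact Or.inl fun Q hQ => (Finset.mem_filter.1 (hFsub hQ)).2
      · exact Or.inr fun Q hQ => (Finset.mem_filter.1 (hFsub hQ)).2
    obtain ⟨G, hGlac, hGE, hGtop⟩ := mkGen S hS (by linarith) J hJdy F hFS hFne hFJ hcase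
    have hle : (ENNReal.ofReal G.top.len)⁻¹ *
        wL1 (fun x => Real.sqrt
          (∑ P ∈ G.E, ‖T1 φ f P‖ ^ 2 *
            Set.indicator P.I.set (fun _ => (1 : ℝ)) x)) ≤ We := by
      rw [hWedef]
      exact le_iSup₂ (f := fun (G : GenSet Pcol nn) (_ : G.Lacunary) =>
        (ENNReal.ofReal G.top.len)⁻¹ *
          wL1 (fun x => Real.sqrt
            (∑ P ∈ G.E, ‖T1 φ f P‖ ^ 2 *
              Set.indicator P.I.set (fun _ => (1 : ℝ)) x))) G hGlac
    rw [hGE, hGtop] at hle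
    have hgf : wL1 (gfun (fun P => ‖T1 φ f P‖) F)
        = wL1 (fun x => Real.sqrt
            (∑ P ∈ F, ‖T1 φ f P‖ ^ 2 *
              Set.indicator P.I.set (fun _ => (1 : ℝ)) x)) := rfl
    rw [hgf]
    have hJ0 : ENNReal.ofReal J.len ≠ 0 := by
      simp only [ne_eq, ENNReal.ofReal_eq_zero, not_le]
      exact J.len_pos
    calc wL1 (fun x => Real.sqrt
            (∑ P ∈ F, ‖T1 φ f P‖ ^ 2 *
              Set.indicator P.I.set (fun _ => (1 : ℝ)) x))
        = ENNReal.ofReal J.len * ((ENNReal.ofReal J.len)⁻¹ *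
            wL1 (fun x => Real.sqrt
              (∑ P ∈ F, ‖T1 φ f P‖ ^ 2 *
                Set.indicator P.I.set (fun _ => (1 : ℝ)) x))) := by
          rw [← mul_assoc, ENNReal.mul_inv_cancel hJ0 ENNReal.ofReal_ne_top, one_mul]
      _ ≤ ENNReal.ofReal J.len * We := mul_le_mul_right hle _
      _ = ENNReal.ofReal (W * J.len) := by
          rw [← hWeq, ← ENNReal.ofReal_mul J.len_pos.le, mul_comm]
  -- apply the John--Nirenberg lemma to both families
  have hjn : ∀ F₀ : Finset Tile,
      (F₀ = S.E.filter (goodT S.ξ nn) ∨ F₀ = S.E.filter (fun Q => ¬ goodT S.ξ nn Q)) →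
      ∑ Q ∈ F₀, ‖T1 φ f Q‖ ^ 2 * Q.I.len ≤ 32 * W ^ 2 * S.top.len := by
    intro F₀ hF₀
    have hsubSE : F₀ ⊆ S.E := by
      rcases hF₀ with rfl | rfl <;> exact Finset.filter_subset _ _
    exact jn (fun P => ‖T1 φ f P‖) (fun Q => norm_nonneg _) W hW0 F₀.card F₀ le_rfl
      (fun Q hQ Q' hQ' hII => hinj Q (hsubSE hQ) Q' (hsubSE hQ') hII)
      (hlocAll F₀ hF₀)
      S.top S.dyTop (fun Q hQ => S.hI Q (hsubSE hQ))
  have hσsplit : ∑ P ∈ S.E, ‖T1 φ f P‖ ^ 2 * P.I.len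
      = ∑ Q ∈ S.E.filter (goodT S.ξ nn), ‖T1 φ f Q‖ ^ 2 * Q.I.len
        + ∑ Q ∈ S.E.filter (fun Q => ¬ goodT S.ξ nn Q), ‖T1 φ f Q‖ ^ 2 * Q.I.len :=
    (Finset.sum_filter_add_sum_filter_not S.E _ _).symm
  have hσ : ∑ P ∈ S.E, ‖T1 φ f P‖ ^ 2 * P.I.len ≤ 64 * W ^ 2 * S.top.len := by
    have h1 := hjn _ (Or.inl rfl)
    have h2 := hjn _ (Or.inr rfl)
    linarith
  have hσnn : 0 ≤ ∑ P ∈ S.E, ‖T1 φ f P‖ ^ 2 * P.I.len :=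
    Finset.sum_nonneg fun P _ => mul_nonneg (sq_nonneg _) P.I.len_pos.le
  have hrw : (∑ P ∈ S.E, ‖T1 φ f P‖ ^ (2:ℝ) * P.I.len)
      = ∑ P ∈ S.E, ‖T1 φ f P‖ ^ 2 * P.I.len := by
    apply Finset.sum_congr rfl
    intro P _
    rw [show (2:ℝ) = ((2:ℕ):ℝ) by norm_num, Real.rpow_natCast]
  rw [hrw]
  have h1 : (∑ P ∈ S.E, ‖T1 φ f P‖ ^ 2 * P.I.len) / S.top.len ≤ 64 * W ^ 2 := by
    rw [div_le_iff₀ hLpos]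
    linarith
  have h2 : ((∑ P ∈ S.E, ‖T1 φ f P‖ ^ 2 * P.I.len) / S.top.len) ^ (1 / (2:ℝ))
      ≤ (64 * W ^ 2) ^ (1 / (2:ℝ)) :=
    Real.rpow_le_rpow (div_nonneg hσnn hLpos.le) h1 (by norm_num)
  have h3 : ((64:ℝ) * W ^ 2) ^ (1 / (2:ℝ)) = 8 * W := by
    rw [← Real.sqrt_eq_rpow, show (64:ℝ) * W ^ 2 = (8 * W) ^ 2 by ring,
      Real.sqrt_sq (by linarith)]
  calc ENNReal.ofReal (((∑ P ∈ S.E, ‖T1 φ f P‖ ^ 2 * P.I.len) / S.top.len) ^ (1 / (2:ℝ)))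
      ≤ ENNReal.ofReal (8 * W) := ENNReal.ofReal_le_ofReal (h2.trans_eq h3)
    _ = ENNReal.ofReal 8 * ENNReal.ofReal W := ENNReal.ofReal_mul (by norm_num)
    _ = ENNReal.ofReal 8 * We := by rw [hWeq]


/-- Lemma 6.3 (characterization of the lacunary size): `‖T₁ f‖_{𝓛^∞(𝒫,S_{2,lac},μ)}` is
controlled by `sup_{E lacunary} |I_E|^{-1} ‖(Σ_{P∈E} |T₁f(P)|² 1_{I_P})^{1/2}‖_{L^{1,∞}}`. -/
theorem statement7 :
    ∃ c₀ : ℝ, 1 ≤ c₀ ∧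
    ∀ C₀ L₁ A : ℝ, c₀ ≤ C₀ → c₀ ≤ L₁ → 1 ≤ A →
    ∀ Cw : ℕ → ℝ,
    ∃ C : ℝ, 0 < C ∧
      ∀ (Pcol : Finset Tile) (φ : Tile → ℝ → ℂ) (m n : ℤ),
        Setting C₀ L₁ A Cw Pcol φ m n →
        ∀ f : ℝ → ℂ,
          oLinf Pcol n (sizeT Pcol n 2 GenSet.Lacunary) (T1 φ f)
            ≤ ENNReal.ofReal C *
              ⨆ (G : GenSet Pcol n) (_ : G.Lacunary),
                (ENNReal.ofReal G.top.len)⁻¹ *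
                  wL1 (fun x => Real.sqrt
                    (∑ P ∈ G.E, ‖T1 φ f P‖ ^ 2 *
                      Set.indicator P.I.set (fun _ => (1 : ℝ)) x)) := by
  refine ⟨100, by norm_num, ?_⟩
  intro C₀ L₁ A hC₀ hL₁ hA Cw
  refine ⟨8, by norm_num, ?_⟩
  intro Pcol φ m n hset f
  obtain ⟨hsp, -, hrig, -⟩ := hset
  have hn : (100:ℝ) ≤ (n:ℝ) := by
    have := hrig.2.2.1
    linarith
  rw [oLinf]
  refine iSup_le fun G => ?_
  rw [sizeT]
  refine iSup_le fun S => iSup_le fun hS => iSup_le fun _ => ?_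
  exact perS hC₀ hsp hn φ f S hS

end
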